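/- The class of n × n square grid graphs does not have bounded tree width: for every k there exists n such that the graph with vertex set {0,…,n-1} × {0,…,n-1} and edges between horizontally and vertically adjacent pairs has tree width greater than k. (It suffices to show tw(grid n) ≥ n for n ≥ 2, or any unbounded lower bound.) -/

import Mathlib

namespace SLTW

/-- Tree positions: finite sequences of naturals. -/
abbrev Pos := List ℕ

/-- `parentOf p q` : `p` is the parent of `q`, i.e. `q = p.i`. -/
def parentOf (p q : Pos) : Prop := ∃ i : ℕ, q = p ++ [i]

/-- Adjacency in a tree: parent in either direction. -/
def adj (p q : Pos) : Prop := parentOf p q ∨ parentOf q p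

/-- A path in a tree with domain `D` from `p` to `q`: pairwise distinct positions,
consecutive ones related by the parent relation. -/
def isPath (D : Set Pos) (l : List Pos) (p q : Pos) : Prop :=
  l ≠ [] ∧ l.Chain' adj ∧ l.Nodup ∧ (∀ x ∈ l, x ∈ D) ∧ l.head? = some p ∧ l.getLast? = some q

/-- `q` lies on some path from `p` to `r` in the tree with domain `D`. -/
def onPath (D : Set Pos) (q p r : Pos) : Prop := ∃ l, isPath D l p r ∧ q ∈ l

/-- A prefix-closed set of tree positions. -/
def prefixClosed (D : Set Pos) : Prop := ∀ p q : Pos, p <+: q → q ∈ D → p ∈ D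

/-- A tree decomposition of a graph with vertex set `V` and (directed) edge set `E`. -/
structure TreeDecomp {α : Type} (V : Set α) (E : Set (α × α)) where
  dom : Set Pos
  bag : Pos → Set α
  dom_fin : dom.Finite
  dom_pc : prefixClosed dom
  cover_v : ∀ v ∈ V, ∃ p ∈ dom, v ∈ bag p
  cover_e : ∀ e ∈ E, ∃ p ∈ dom, e.1 ∈ bag p ∧ e.2 ∈ bag p
  conn : ∀ p q r, p ∈ dom → q ∈ dom → r ∈ dom → onPath dom q p r →
    bag p ∩ bag r ⊆ bag q

/-- The decomposition has width at most `w`: every bag is finite of cardinality `≤ w + 1`. -/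
def TreeDecomp.widthLE {α : Type} {V : Set α} {E : Set (α × α)}
    (t : TreeDecomp V E) (w : ℕ) : Prop :=
  ∀ p ∈ t.dom, (t.bag p).Finite ∧ (t.bag p).ncard ≤ w + 1

/-- The graph `(V, E)` has tree width at most `w`. -/
def twLE {α : Type} (V : Set α) (E : Set (α × α)) (w : ℕ) : Prop :=
  ∃ t : TreeDecomp V E, t.widthLE w

/-! ### States of Separation Logic -/

abbrev Loc := ℕ
abbrev PVar := ℕ
abbrev Sel := ℕ
abbrev Heap := Loc → Option (Sel → Option Loc)
abbrev Store := PVar → Option Loc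

structure SLState where
  store : Store
  heap : Heap

/-- Domain of the heap (allocated locations). -/
def SLState.hdom (S : SLState) : Set Loc := {l | S.heap l ≠ none}
/-- Image of the store. -/
def SLState.simg (S : SLState) : Set Loc := {l | ∃ u, S.store u = some l}
/-- Image of the heap: destinations of selector edges. -/
def SLState.hImg (S : SLState) : Set Loc :=
  {l | ∃ a f k, S.heap a = some f ∧ f k = some l}
/-- All locations of a state. -/
def SLState.locs (S : SLState) : Set Loc := S.simg ∪ S.hdom ∪ S.hImg
/-- Edges of the state, seen as a graph. -/
def SLState.edges (S : SLState) : Set (Loc × Loc) :=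
  {e | ∃ f k, S.heap e.1 = some f ∧ f k = some e.2}
/-- Tree width of a state is at most `w`. -/
def SLState.twLE (S : SLState) (w : ℕ) : Prop := SLTW.twLE S.locs S.edges w



/-! ### Syntax of basic SL formulae -/

abbrev LVar := ℕ
/-- Variables: program variables or logical variables. -/
abbrev Var := PVar ⊕ LVar

/-- Combined evaluation `s ⊕ ι` of program and logical variables. -/
def eval (s : Store) (ι : LVar → Option Loc) : Var → Option Loc
  | Sum.inl u => s u
  | Sum.inr x => ι x

inductive PureF where
  | eq (a b : Var)
  | ne (a b : Var)
  | and (p q : PureF)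

inductive SpatialF where
  | emp
  | pto (a : Var) (bs : List Var)
  | star (s₁ s₂ : SpatialF)

inductive BasicF where
  | base (p : PureF) (s : SpatialF)
  | ex (x : LVar) (f : BasicF)

/-- Number of variable occurrences in a spatial formula. -/
def SpatialF.size : SpatialF → ℕ
  | .emp => 0
  | .pto _ bs => 1 + bs.length
  | .star s₁ s₂ => s₁.size + s₂.size

/-- Size of a basic formula: variable occurrences of its spatial part. -/
def BasicF.size : BasicF → ℕ
  | .base _ s => s.size
  | .ex _ f => f.size

/-- Two heaps have disjoint domains. -/
def heapDisj (h₁ h₂ : Heap) : Prop := ∀ l, h₁ l = none ∨ h₂ l = none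

/-- Union of two heaps (left-biased, used under disjointness). -/
def heapUnion (h₁ h₂ : Heap) : Heap := fun l => (h₁ l).orElse (fun _ => h₂ l)

/-- The heap of a single allocated cell at `la` with selectors `1..n` pointing to
the evaluations of `bs` (strict semantics). -/
def ptoHeap (s : Store) (ι : LVar → Option Loc) (la : Loc) (bs : List Var) : Heap :=
  fun l => if l = la then
    some (fun k => if 1 ≤ k ∧ k ≤ bs.length then eval s ι (bs.getD (k-1) (Sum.inr 0)) else none)
  else none

def PureSat (S : SLState) (ι : LVar → Option Loc) : PureF → Prop
  | .eq a b => eval S.store ι a = eval S.store ι b ∧ eval S.store ι a ≠ none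
  | .ne a b => eval S.store ι a ≠ eval S.store ι b ∧
      eval S.store ι a ≠ none ∧ eval S.store ι b ≠ none
  | .and p q => PureSat S ι p ∧ PureSat S ι q

/-- Strict semantics of spatial formulae. -/
def SpSat (S : SLState) (ι : LVar → Option Loc) : SpatialF → Prop
  | .emp => ∀ l, S.heap l = none
  | .pto a bs => ∃ la, eval S.store ι a = some la ∧ (∀ b ∈ bs, eval S.store ι b ≠ none) ∧
      S.heap = ptoHeap S.store ι la bs
  | .star s₁ s₂ => ∃ h₁ h₂, heapDisj h₁ h₂ ∧ S.heap = heapUnion h₁ h₂ ∧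
      SpSat ⟨S.store, h₁⟩ ι s₁ ∧ SpSat ⟨S.store, h₂⟩ ι s₂

def BasicSat (S : SLState) (ι : LVar → Option Loc) : BasicF → Prop
  | .base p s => PureSat S ι p ∧ SpSat S ι s
  | .ex x f => ∃ l : Loc, BasicSat S (Function.update ι x (some l)) f

/-- Iterated separating conjunction. -/
def bigStar (l : List SpatialF) : SpatialF := l.foldr SpatialF.star SpatialF.emp


end SLTW
open SLTW in
/-- The vertex set of the `n × n` grid. -/
def gridV (n : ℕ) : Set (ℕ × ℕ) := {p | p.1 < n ∧ p.2 < n}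

open SLTW in
/-- The edges of the `n × n` grid: horizontally and vertically adjacent pairs. -/
def gridE (n : ℕ) : Set ((ℕ × ℕ) × (ℕ × ℕ)) :=
  {e | e.1 ∈ gridV n ∧ e.2 ∈ gridV n ∧
    ((e.2.1 = e.1.1 + 1 ∧ e.2.2 = e.1.2) ∨ (e.2.1 = e.1.1 ∧ e.2.2 = e.1.2 + 1))}

namespace TWAux
open SLTW List

/-! ### Longest common prefix -/

def meet : Pos → Pos → Pos
  | a::p, b::q => if a = b then a :: meet p q else []
  | _, _ => []

lemma meet_nil_left (q : Pos) : meet [] q = [] := by cases q <;> rfl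
lemma meet_nil_right (p : Pos) : meet p [] = [] := by cases p <;> rfl

lemma meet_prefix_left : ∀ p q : Pos, meet p q <+: p
  | [], q => by simp [meet_nil_left]
  | a::p, [] => by simp [meet_nil_right]
  | a::p, b::q => by
      by_cases h : a = b
      · simpa [meet, h] using meet_prefix_left p q
      · simp [meet, h]

lemma meet_prefix_right : ∀ p q : Pos, meet p q <+: q
  | [], q => by simp [meet_nil_left]
  | a::p, [] => by simp [meet_nil_right]
  | a::p, b::q => by
      by_cases h : a = b
      · simpa [meet, h] using meet_prefix_right p q
      · simp [meet, h]

lemma prefix_meet : ∀ {r p q : Pos}, r <+: p → r <+: q → r <+: meet p q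
  | [], p, q, _, _ => nil_prefix ..
  | c::r, a::p, b::q, h1, h2 => by
      rw [cons_prefix_cons] at h1 h2
      obtain ⟨rfl, h1⟩ := h1
      obtain ⟨rfl, h2⟩ := h2
      simpa [meet] using prefix_meet h1 h2
  | c::r, [], q, h1, _ => by simp at h1
  | c::r, a::p, [], _, h2 => by simp at h2

/-! ### Chains up the tree -/

def chainUp (m : Pos) : Pos → List Pos
  | [] => [m]
  | a :: s => m :: chainUp (m ++ [a]) s

lemma chainUp_ne_nil (m s : Pos) : chainUp m s ≠ [] := by cases s <;> simp [chainUp]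

lemma chainUp_head? (m s : Pos) : (chainUp m s).head? = some m := by
  cases s <;> simp [chainUp]

lemma chainUp_getLast? : ∀ (s m : Pos), (chainUp m s).getLast? = some (m ++ s)
  | [], m => by simp [chainUp]
  | a::s, m => by
      rw [chainUp, getLast?_cons, chainUp_getLast? s (m ++ [a])]
      simp

lemma mem_chainUp : ∀ (s m x : Pos), x ∈ chainUp m s → m <+: x ∧ x <+: m ++ s
  | [], m, x, h => by
      simp [chainUp] at h
      simp [h]
  | a::s, m, x, h => by
      rw [chainUp, mem_cons] at h
      rcases h with rfl | h
      · exact ⟨prefix_refl _, by simp⟩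
      · have H := mem_chainUp s (m ++ [a]) x h
        exact ⟨(prefix_append m [a]).trans H.1, by simpa using H.2⟩

lemma chainUp_mem : ∀ (s m x : Pos), m <+: x → x <+: m ++ s → x ∈ chainUp m s
  | [], m, x, h1, h2 => by
      have h2' : x <+: m := by simpa using h2
      have : x = m := h2'.eq_of_length_le h1.length_le
      simp [chainUp, this]
  | a::s, m, x, h1, h2 => by
      rw [chainUp, mem_cons]
      by_cases hx : x = m
      · exact Or.inl hx
      · right
        refine chainUp_mem s (m ++ [a]) x ?_ (by simpa using h2)
        have hlen : m.length + 1 ≤ x.length := by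
          rcases lt_or_eq_of_le h1.length_le with h | h
          · omega
          · exact absurd (h1.eq_of_length_le h.ge).symm hx
        have e1 : (m ++ a :: s).take (m.length + 1) = m ++ [a] := by
          rw [take_append]
          simp
        have e2 : (m ++ a :: s).take x.length = x := (prefix_iff_eq_take.mp h2).symm
        rw [← e1, ← e2]
        exact take_prefix_take_left hlen

lemma chainUp_chain' : ∀ (s m : Pos), (chainUp m s).Chain' adj
  | [], m => by simp [chainUp, Chain']
  | a::s, m => by
      rw [chainUp, Chain', isChain_cons]
      refine ⟨?_, chainUp_chain' s (m ++ [a])⟩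
      intro y hy
      rw [chainUp_head?] at hy
      cases hy
      exact Or.inl ⟨a, rfl⟩

lemma chainUp_nodup : ∀ (s m : Pos), (chainUp m s).Nodup
  | [], m => by simp [chainUp]
  | a::s, m => by
      rw [chainUp, nodup_cons]
      refine ⟨fun hm => ?_, chainUp_nodup s (m ++ [a])⟩
      have := (mem_chainUp s (m ++ [a]) m hm).1.length_le
      simp at this

/-! ### The canonical path between two tree positions -/

def pathBetween (p q : Pos) : List Pos :=
  (chainUp (meet p q) (p.drop (meet p q).length)).reverse ++
  (chainUp (meet p q) (q.drop (meet p q).length)).tail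

lemma adj_symm {p q : Pos} (h : adj p q) : adj q p := h.symm

lemma isPath_pathBetween {D : Set Pos} (hD : prefixClosed D) {p q : Pos}
    (hp : p ∈ D) (hq : q ∈ D) : isPath D (pathBetween p q) p q := by
  rw [pathBetween]
  set m := meet p q with hm
  have hmp : m ++ p.drop m.length = p := prefix_iff_eq_append.mp (meet_prefix_left p q)
  have hmq : m ++ q.drop m.length = q := prefix_iff_eq_append.mp (meet_prefix_right p q)
  set sp := p.drop m.length
  set sq := q.drop m.length
  have hL1ne : (chainUp m sp).reverse ≠ [] := by simp [chainUp_ne_nil]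
  have memL1 : ∀ x ∈ (chainUp m sp).reverse, m <+: x ∧ x <+: p := by
    intro x hx
    rw [mem_reverse] at hx
    have := mem_chainUp _ _ _ hx
    rw [hmp] at this
    exact this
  have memL2 : ∀ x ∈ (chainUp m sq).tail, (m <+: x ∧ x <+: q) ∧ x ≠ m := by
    intro x hx
    have hx' := mem_of_mem_tail hx
    have H := mem_chainUp _ _ _ hx'
    rw [hmq] at H
    refine ⟨H, fun hxm => ?_⟩
    subst hxm
    have := chainUp_nodup sq m
    cases hsq : sq with
    | nil => rw [hsq] at hx; simp [chainUp] at hx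
    | cons a s =>
        rw [hsq, chainUp, nodup_cons] at this
        rw [hsq, chainUp] at hx
        exact this.1 (by simpa using hx)
  refine ⟨fun h => hL1ne (List.append_eq_nil_iff.mp h).1, ?_, ?_, ?_, ?_, ?_⟩
  · rw [Chain', isChain_append]
    refine ⟨?_, IsChain.tail (chainUp_chain' sq m), ?_⟩
    · rw [isChain_reverse]
      exact IsChain.imp (fun a b h => Or.symm h) (chainUp_chain' sp m)
    · intro x hx y hy
      rw [getLast?_reverse, chainUp_head?, Option.mem_def, Option.some_inj] at hx
      subst hx
      cases hsq : sq with
      | nil => rw [hsq] at hy; simp [chainUp] at hy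
      | cons a s =>
          rw [hsq, chainUp] at hy
          simp only [List.tail_cons] at hy
          rw [chainUp_head?, Option.mem_def, Option.some_inj] at hy
          subst hy
          exact Or.inl ⟨a, rfl⟩
  · rw [nodup_append]
    refine ⟨by simpa using chainUp_nodup sp m, (chainUp_nodup sq m).sublist (tail_sublist _), ?_⟩
    intro x hx1 y hx2 hxy
    subst hxy
    obtain ⟨h1, h2⟩ := memL1 x hx1
    obtain ⟨⟨h3, h4⟩, h5⟩ := memL2 x hx2
    exact h5 (h1.eq_of_length_le (prefix_meet h2 h4).length_le).symm
  · intro x hx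
    rw [mem_append] at hx
    rcases hx with hx | hx
    · exact hD x p (memL1 x hx).2 hp
    · exact hD x q (memL2 x hx).1.2 hq
  · rw [head?_append, head?_reverse, chainUp_getLast?, hmp]
    rfl
  · rw [getLast?_append, getLast?_reverse, chainUp_head?]
    cases hsq : sq with
    | nil =>
        have : q = m := by rw [← hmq, hsq, append_nil]
        simp [chainUp, this]
    | cons a s =>
        rw [chainUp]
        simp only [List.tail_cons]
        rw [chainUp_getLast?]
        have : m ++ [a] ++ s = q := by rw [← hmq, hsq]; simp
        simp [this]

lemma mem_pathBetween {p q x : Pos} (h1 : meet p q <+: x) (h2 : x <+: p ∨ x <+: q) :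
    x ∈ pathBetween p q := by
  rw [pathBetween]
  set m := meet p q with hm
  have hmp : m ++ p.drop m.length = p := prefix_iff_eq_append.mp (meet_prefix_left p q)
  have hmq : m ++ q.drop m.length = q := prefix_iff_eq_append.mp (meet_prefix_right p q)
  rw [mem_append]
  rcases h2 with h2 | h2
  · exact Or.inl (by rw [mem_reverse]; exact chainUp_mem _ _ _ h1 (by rw [hmp]; exact h2))
  · by_cases hxm : x = m
    · refine Or.inl ?_
      rw [mem_reverse]
      exact chainUp_mem _ _ _ (by rw [hxm]) (by rw [hxm, hmp]; exact meet_prefix_left p q)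
    · refine Or.inr ?_
      have hx : x ∈ chainUp m (q.drop m.length) :=
        chainUp_mem _ _ _ h1 (by rw [hmq]; exact h2)
      cases hsq : q.drop m.length with
      | nil => rw [hsq] at hx; simp [chainUp] at hx; exact absurd hx hxm
      | cons a s =>
          rw [hsq, chainUp, mem_cons] at hx
          rw [chainUp]
          simpa using hx.resolve_left hxm

lemma onPath_of_between {D : Set Pos} (hD : prefixClosed D) {p q x : Pos}
    (hp : p ∈ D) (hq : q ∈ D) (h1 : meet p q <+: x) (h2 : x <+: p ∨ x <+: q) :
    onPath D x p q :=
  ⟨pathBetween p q, isPath_pathBetween hD hp hq, mem_pathBetween h1 h2⟩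

/-! ### Consequences for tree decompositions -/

variable {α : Type} {V : Set α} {E : Set (α × α)}

lemma mem_dom_of_prefix (t : TreeDecomp V E) {x p : Pos} (h : x <+: p) (hp : p ∈ t.dom) :
    x ∈ t.dom := t.dom_pc x p h hp

lemma bag_subset (t : TreeDecomp V E) {p q x : Pos}
    (hp : p ∈ t.dom) (hq : q ∈ t.dom) (h1 : meet p q <+: x) (h2 : x <+: p ∨ x <+: q) :
    t.bag p ∩ t.bag q ⊆ t.bag x := by
  have hx : x ∈ t.dom := by
    rcases h2 with h | h
    · exact mem_dom_of_prefix t h hp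
    · exact mem_dom_of_prefix t h hq
  exact t.conn p x q hp hx hq (onPath_of_between t.dom_pc hp hq h1 h2)

end TWAux

namespace TWGrid
open SLTW List TWAux

def cross (n i : ℕ) : Set (ℕ × ℕ) := {v | (v.1 = i ∨ v.2 = i) ∧ v ∈ gridV n}

variable {n : ℕ}

def Tset (t : TreeDecomp (gridV n) (gridE n)) (i : ℕ) : Set Pos :=
  {p | p ∈ t.dom ∧ ∃ v ∈ cross n i, v ∈ t.bag p}

def Good (t : TreeDecomp (gridV n) (gridE n)) (i : ℕ) (r : Pos) (v : ℕ × ℕ) : Prop :=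
  ∀ q ∈ t.dom, v ∈ t.bag q →
    r <+: q ∧ ∀ y ∈ t.dom, r <+: y → y <+: q → y ∈ Tset t i

variable {t : TreeDecomp (gridV n) (gridE n)} {i : ℕ} {r : Pos}

lemma good_base (hrd : r ∈ t.dom) (hmin : ∀ q ∈ Tset t i, r.length ≤ q.length)
    {u : ℕ × ℕ} (hu : u ∈ cross n i) (hub : u ∈ t.bag r) : Good t i r u := by
  intro q hq hq2
  have hmd : meet r q ∈ t.dom := mem_dom_of_prefix t (meet_prefix_left r q) hrd
  have hub' : u ∈ t.bag (meet r q) :=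
    bag_subset t hrd hq (prefix_refl _) (Or.inl (meet_prefix_left r q)) ⟨hub, hq2⟩
  have hmT : meet r q ∈ Tset t i := ⟨hmd, u, hu, hub'⟩
  have heq : meet r q = r := (meet_prefix_left r q).eq_of_length_le (hmin _ hmT)
  have hrq : r <+: q := heq ▸ meet_prefix_right r q
  refine ⟨hrq, fun y hy h1 h2 => ⟨hy, u, hu, ?_⟩⟩
  exact bag_subset t hrd hq (heq.symm ▸ h1) (Or.inr h2) ⟨hub, hq2⟩

lemma good_step (hmin : ∀ q ∈ Tset t i, r.length ≤ q.length)
    {u v : ℕ × ℕ} (hgu : Good t i r u)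
    (he : (u, v) ∈ gridE n ∨ (v, u) ∈ gridE n)
    (hv : v ∈ cross n i) : Good t i r v := by
  obtain ⟨b, hb, hub, hvb⟩ : ∃ b ∈ t.dom, u ∈ t.bag b ∧ v ∈ t.bag b := by
    rcases he with h | h
    · obtain ⟨b, hb, h1, h2⟩ := t.cover_e _ h; exact ⟨b, hb, h1, h2⟩
    · obtain ⟨b, hb, h1, h2⟩ := t.cover_e _ h; exact ⟨b, hb, h2, h1⟩
  intro q hq hvq
  have hrb : r <+: b := (hgu b hb hub).1
  have hmd : meet b q ∈ t.dom := mem_dom_of_prefix t (meet_prefix_left b q) hb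
  have hvm : v ∈ t.bag (meet b q) :=
    bag_subset t hb hq (prefix_refl _) (Or.inl (meet_prefix_left b q)) ⟨hvb, hvq⟩
  have hmT : meet b q ∈ Tset t i := ⟨hmd, v, hv, hvm⟩
  have hrm : r <+: meet b q := by
    rcases prefix_or_prefix_of_prefix hrb (meet_prefix_left b q) with h | h
    · exact h
    · exact (h.eq_of_length_le (hmin _ hmT)) ▸ prefix_refl r
  refine ⟨hrm.trans (meet_prefix_right b q), fun y hy h1 h2 => ?_⟩
  rcases prefix_or_prefix_of_prefix h2 (meet_prefix_right b q) with h | h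
  · exact (hgu b hb hub).2 y hy h1 (h.trans (meet_prefix_left b q))
  · exact ⟨hy, v, hv, bag_subset t hb hq h (Or.inr h2) ⟨hvb, hvq⟩⟩

lemma transfer {P : ℕ → Prop} (hstep : ∀ j, j + 1 < n → (P j ↔ P (j + 1))) :
    ∀ j, j < n → P j → ∀ j', j' < n → P j' := by
  have key : ∀ j, j < n → (P j ↔ P 0) := by
    intro j
    induction j with
    | zero => exact fun _ => Iff.rfl
    | succ j ih =>
        intro h
        rw [← hstep j h]
        exact ih (by omega)
  exact fun j hj hP j' hj' => (key j' hj').mpr ((key j hj).mp hP)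

lemma row_edge {i j : ℕ} (hi : i < n) (hj : j + 1 < n) :
    ((i, j), (i, j + 1)) ∈ gridE n := ⟨⟨hi, Nat.lt_of_succ_lt hj⟩, ⟨hi, hj⟩, Or.inr ⟨rfl, rfl⟩⟩

lemma col_edge {a i : ℕ} (hi : i < n) (ha : a + 1 < n) :
    ((a, i), (a + 1, i)) ∈ gridE n := ⟨⟨Nat.lt_of_succ_lt ha, hi⟩, ⟨ha, hi⟩, Or.inl ⟨rfl, rfl⟩⟩

lemma row_cross {i j : ℕ} (hi : i < n) (hj : j < n) : ((i, j) : ℕ × ℕ) ∈ cross n i :=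
  ⟨Or.inl rfl, hi, hj⟩

lemma col_cross {a i : ℕ} (hi : i < n) (ha : a < n) : ((a, i) : ℕ × ℕ) ∈ cross n i :=
  ⟨Or.inr rfl, ha, hi⟩

lemma good_row (hmin : ∀ q ∈ Tset t i, r.length ≤ q.length) (hi : i < n) :
    ∀ j, j < n → Good t i r (i, j) → ∀ j', j' < n → Good t i r (i, j') := by
  refine transfer fun j hj => ⟨fun h => ?_, fun h => ?_⟩
  · exact good_step hmin h (Or.inl (row_edge hi hj)) (row_cross hi hj)
  · exact good_step hmin h (Or.inr (row_edge hi hj)) (row_cross hi (by omega))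

lemma good_col (hmin : ∀ q ∈ Tset t i, r.length ≤ q.length) (hi : i < n) :
    ∀ a, a < n → Good t i r (a, i) → ∀ a', a' < n → Good t i r (a', i) := by
  refine transfer fun a ha => ⟨fun h => ?_, fun h => ?_⟩
  · exact good_step hmin h (Or.inl (col_edge hi ha)) (col_cross hi ha)
  · exact good_step hmin h (Or.inr (col_edge hi ha)) (col_cross hi (by omega))

lemma good_all (hrT : r ∈ Tset t i) (hmin : ∀ q ∈ Tset t i, r.length ≤ q.length)
    (hi : i < n) : ∀ v ∈ cross n i, Good t i r v := by
  obtain ⟨hrd, ⟨u1, u2⟩, ⟨hu1, hu2, hu3⟩, hub⟩ := hrT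
  have hbase : Good t i r (u1, u2) := good_base hrd hmin ⟨hu1, hu2, hu3⟩ hub
  have hii : Good t i r (i, i) := by
    rcases hu1 with h | h
    · subst h; exact good_row hmin hi u2 hu3 hbase u1 hi
    · subst h; exact good_col hmin hi u1 hu2 hbase u2 hi
  rintro ⟨v1, v2⟩ ⟨hv1, hv2, hv3⟩
  rcases hv1 with h | h
  · subst h; exact good_row hmin hv2 v1 hv2 hii v2 hv3
  · subst h; exact good_col hmin hv3 v2 hv3 hii v1 hv2

end TWGrid

open SLTW TWAux TWGrid in
/-- square grids do not have bounded tree width. -/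
theorem grids_unbounded_treewidth :
    ∀ k : ℕ, ∃ n : ℕ, ¬ twLE (gridV n) (gridE n) k := by
  intro k
  refine ⟨2 * k + 3, ?_⟩
  set n := 2 * k + 3 with hn
  rintro ⟨t, hw⟩
  have hn0 : 0 < n := by omega
  have hex : ∀ i : ℕ, ∃ rr : Pos, i < n →
      rr ∈ Tset t i ∧ ∀ q ∈ Tset t i, rr.length ≤ q.length := by
    intro i
    by_cases hi : i < n
    · have hfin : (Tset t i).Finite := t.dom_fin.subset fun p hp => hp.1
      have hne : (Tset t i).Nonempty := by
        obtain ⟨p, hp, hbp⟩ := t.cover_v (i, i) ⟨hi, hi⟩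
        exact ⟨p, hp, (i, i), ⟨Or.inl rfl, hi, hi⟩, hbp⟩
      obtain ⟨rr, hrr, hm⟩ := Set.exists_min_image (Tset t i) List.length hfin hne
      exact ⟨rr, fun _ => ⟨hrr, hm⟩⟩
    · exact ⟨[], fun h => absurd h hi⟩
  choose r hr using hex
  obtain ⟨i₀, hi₀, hmax⟩ := Finset.exists_max_image (Finset.range n)
      (fun i => (r i).length) ⟨0, Finset.mem_range.mpr hn0⟩
  rw [Finset.mem_range] at hi₀
  have hrd : r i₀ ∈ t.dom := ((hr i₀ hi₀).1).1
  have key : ∀ j, ∃ v : ℕ × ℕ, j < n → v ∈ cross n j ∧ v ∈ t.bag (r i₀) := by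
    intro j
    by_cases hj : j < n
    · obtain ⟨x, hx, hbx⟩ := t.cover_v ((i₀, j) : ℕ × ℕ) ⟨hi₀, hj⟩
      have G1 := good_all (hr i₀ hi₀).1 (hr i₀ hi₀).2 hi₀ (i₀, j) (row_cross hi₀ hj) x hx hbx
      have G2 := good_all (hr j hj).1 (hr j hj).2 hj (i₀, j) (col_cross hj hi₀) x hx hbx
      have hji : r j <+: r i₀ := by
        rcases List.prefix_or_prefix_of_prefix G2.1 G1.1 with h | h
        · exact h
        · exact (h.eq_of_length_le (hmax j (Finset.mem_range.mpr hj))) ▸ List.prefix_refl _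
      obtain ⟨_, v, hvc, hvb⟩ := G2.2 (r i₀) hrd hji G1.1
      exact ⟨v, fun _ => ⟨hvc, hvb⟩⟩
    · exact ⟨(0, 0), fun h => absurd h hj⟩
  choose v hv using key
  obtain ⟨hfin, hcard⟩ := hw (r i₀) hrd
  have himg : (Finset.range n).image v ⊆ hfin.toFinset := by
    intro b hb
    rw [Finset.mem_image] at hb
    obtain ⟨j, hj, rfl⟩ := hb
    rw [Set.Finite.mem_toFinset]
    exact (hv j (Finset.mem_range.mp hj)).2
  have hfib : ∀ b ∈ (Finset.range n).image v,
      ((Finset.range n).filter fun j => v j = b).card ≤ 2 := by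
    intro b _
    have hsub : ((Finset.range n).filter fun j => v j = b) ⊆ {b.1, b.2} := by
      intro j hj
      rw [Finset.mem_filter, Finset.mem_range] at hj
      obtain ⟨hjn, hjb⟩ := hj
      have hc := (hv j hjn).1.1
      rw [hjb] at hc
      rcases hc with h | h
      · exact Finset.mem_insert.mpr (Or.inl h.symm)
      · exact Finset.mem_insert.mpr (Or.inr (Finset.mem_singleton.mpr h.symm))
    calc ((Finset.range n).filter fun j => v j = b).card
        ≤ ({b.1, b.2} : Finset ℕ).card := Finset.card_le_card hsub
      _ ≤ 2 := le_trans (Finset.card_insert_le _ _) (by simp)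
  have h1 : n ≤ 2 * ((Finset.range n).image v).card := by
    simpa using Finset.card_le_mul_card_image (Finset.range n) 2 hfib
  have h2 : ((Finset.range n).image v).card ≤ k + 1 :=
    calc ((Finset.range n).image v).card ≤ hfin.toFinset.card := Finset.card_le_card himg
      _ = (t.bag (r i₀)).ncard := (Set.ncard_eq_toFinset_card _ hfin).symm
      _ ≤ k + 1 := hcard
  omega
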